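/- One has Δ_n = o(μ_n) as n → ∞; that is, Δ_n / μ_n → 0 as n → ∞. -/

import Mathlib

open Filter

/-- `Del δ μ n` is `Δ_n := δ ∑_{j=0}^{n-1} (μ_{j+1} - μ_j)
    ∑_{m=j+1}^∞ ( 1/(μ_m − μ_{m−1}) + 1/(μ_{m+1} − μ_m) )`; in particular `Δ_0 = 0`. -/
noncomputable def Del (δ : ℝ) (μ : ℕ → ℝ) (n : ℕ) : ℝ :=
  δ * ∑ j ∈ Finset.range n, (μ (j + 1) - μ j) *
    ∑' i : ℕ, (1 / (μ (j + 1 + i) - μ (j + i)) + 1 / (μ (j + 2 + i) - μ (j + 1 + i)))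

/-- `Δ_n = o(μ_n)` as `n → ∞`, i.e. `Δ_n / μ_n → 0`. -/
theorem stmt_7 (μ : ℕ → ℝ) (hmono : StrictMono μ)
    (hsum : Summable fun n => 1 / (μ (n + 1) - μ n))
    (δ : ℝ) (hδ : 0 < δ) :
    Tendsto (fun n => Del δ μ n / μ n) atTop (nhds 0) := by
  set f : ℕ → ℝ := fun n => 1 / (μ (n + 1) - μ n) with hf
  set a : ℕ → ℝ := fun j => μ (j + 1) - μ j with ha
  have hapos : ∀ j, 0 < a j := fun j => sub_pos.2 (hmono (lt_add_one j))
  set T : ℕ → ℝ := fun j => ∑' i : ℕ, f (i + j) with hT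
  -- rewrite the inner tsum
  have hDel : ∀ n, Del δ μ n = δ * ∑ j ∈ Finset.range n, (T j + T (j + 1)) * a j := by
    intro n
    unfold Del
    congr 1
    apply Finset.sum_congr rfl
    intro j _
    rw [mul_comm ((T j + T (j+1))) (a j)]
    congr 1
    have hsj : Summable fun i : ℕ => f (i + j) := (summable_nat_add_iff j).2 hsum
    have hsj1 : Summable fun i : ℕ => f (i + (j + 1)) := (summable_nat_add_iff (j+1)).2 hsum
    have : ∀ i : ℕ, (1 / (μ (j + 1 + i) - μ (j + i)) + 1 / (μ (j + 2 + i) - μ (j + 1 + i)))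
        = f (i + j) + f (i + (j + 1)) := by
      intro i
      simp only [hf]
      rw [show j + 1 + i = i + j + 1 from by omega, show j + i = i + j from by omega,
        show j + 2 + i = i + (j + 1) + 1 from by omega, show i + j + 1 = i + (j + 1) from by omega]
    rw [tsum_congr this, Summable.tsum_add hsj hsj1]
  -- f is positive and tends to 0, so a tends to atTop
  have hfpos : ∀ n, 0 < f n := fun n => one_div_pos.mpr (hapos n)
  have hf0 : Tendsto f atTop (nhds 0) := hsum.tendsto_atTop_zero
  have hainv : ∀ n, a n = (f n)⁻¹ := by
    intro n
    rw [hf]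
    simp only [one_div, inv_inv]
    rfl
  have hatop : Tendsto a atTop atTop := by
    have : Tendsto (fun n => (f n)⁻¹) atTop atTop :=
      tendsto_inv_nhdsGT_zero.comp
        (tendsto_nhdsWithin_of_tendsto_nhds_of_eventually_within _ hf0
          (Eventually.of_forall fun n => hfpos n))
    exact this.congr fun n => (hainv n).symm
  -- partial sums of a tend to atTop
  have hsum_a : ∀ n, ∑ j ∈ Finset.range n, a j = μ n - μ 0 :=
    fun n => Finset.sum_range_sub μ n
  have hna : ¬ Summable a := fun h =>
    not_tendsto_nhds_of_tendsto_atTop hatop 0 h.tendsto_atTop_zero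
  have hpsum_top : Tendsto (fun n => ∑ j ∈ Finset.range n, a j) atTop atTop :=
    (not_summable_iff_tendsto_nat_atTop_of_nonneg fun j => (hapos j).le).1 hna
  have hμtop : Tendsto μ atTop atTop := by
    have := tendsto_atTop_add_const_right atTop (μ 0) hpsum_top
    refine this.congr fun n => ?_
    rw [hsum_a n]; ring
  -- the coefficients tend to zero
  have hTzero : Tendsto T atTop (nhds 0) := tendsto_sum_nat_add f
  have hczero : Tendsto (fun j => δ * (T j + T (j + 1))) atTop (nhds 0) := by
    have h1 : Tendsto (fun j => T (j + 1)) atTop (nhds 0) :=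
      hTzero.comp (tendsto_add_atTop_nat 1)
    have := (hTzero.add h1).const_mul δ
    simpa using this
  -- little-o
  have hlo : (fun j => δ * (T j + T (j + 1)) * a j) =o[atTop] a := by
    rw [Asymptotics.isLittleO_iff_tendsto fun j h => absurd h (hapos j).ne']
    refine hczero.congr fun j => ?_
    rw [mul_div_assoc, div_self (hapos j).ne', mul_one]
  have hlo2 : (fun n => ∑ j ∈ Finset.range n, δ * (T j + T (j + 1)) * a j)
      =o[atTop] fun n => ∑ j ∈ Finset.range n, a j :=
    hlo.sum_range (fun j => (hapos j).le) hpsum_top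
  have hconst : (fun _ : ℕ => μ 0) =o[atTop] μ :=
    Asymptotics.isLittleO_const_left.2 (Or.inr (tendsto_norm_atTop_atTop.comp hμtop))
  have hbig : (fun n => μ n - μ 0) =O[atTop] μ :=
    (Asymptotics.isBigO_refl μ atTop).sub hconst.isBigO
  have hbigS : (fun n => ∑ j ∈ Finset.range n, a j) =O[atTop] μ :=
    hbig.congr' (Eventually.of_forall fun n => (hsum_a n).symm) EventuallyEq.rfl
  have hDelo : (fun n => Del δ μ n) =o[atTop] μ := by
    refine (hlo2.trans_isBigO hbigS).congr' (Eventually.of_forall fun n => ?_) EventuallyEq.rfl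
    show _ = Del δ μ n
    symm
    rw [hDel n, Finset.mul_sum]
    exact Finset.sum_congr rfl fun j _ => by ring
  exact hDelo.tendsto_div_nhds_zero
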